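/- (Proposition 2, part 2) Let n = 3 and 0 < r_1 < r_2 < r_3 be pairwise distinct. Each of the three parades (α_1, α_2) ∈ {(π, 0), (0, π), (π, π)} (with α_3 = 0) is a critical point of L at which the Hessian matrix in the coordinates (α_1, α_2) has strictly negative determinant; hence each is a nondegenerate saddle of Morse index 1. -/

import Mathlib

open Real

/-- Length of the chordal segment between points at radii `r`, `r'` whose polar angles
differ by `θ`. -/
noncomputable def ell (r r' θ : ℝ) : ℝ :=
  Real.sqrt (r ^ 2 + r' ^ 2 - 2 * r * r' * Real.cos θ)

/-- The perimeter of the connecting cycle for three concentric circles of radii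
`r1, r2, r3`, as a function of the polar angles `a1, a2` of the first two vertices,
the third angle being fixed to `0`. -/
noncomputable def L3 (r1 r2 r3 : ℝ) (a1 a2 : ℝ) : ℝ :=
  ell r1 r2 (a2 - a1) + ell r2 r3 (0 - a2) + ell r3 r1 (a1 - 0)

/-- Partial derivative in the first variable. -/
noncomputable def pd1 (f : ℝ → ℝ → ℝ) (a b : ℝ) : ℝ := deriv (fun x => f x b) a

/-- Partial derivative in the second variable. -/
noncomputable def pd2 (f : ℝ → ℝ → ℝ) (a b : ℝ) : ℝ := deriv (fun y => f a y) b

/-- The Hessian matrix of `L3 r1 r2 r3` at `(a, b)` in the reduced coordinates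
`(α₁, α₂)`. -/
noncomputable def hess3 (r1 r2 r3 a b : ℝ) : Matrix (Fin 2) (Fin 2) ℝ :=
  !![pd1 (pd1 (L3 r1 r2 r3)) a b, pd1 (pd2 (L3 r1 r2 r3)) a b;
     pd2 (pd1 (L3 r1 r2 r3)) a b, pd2 (pd2 (L3 r1 r2 r3)) a b]

/-- first-derivative-in-angle function -/
noncomputable def Dd (r r' θ : ℝ) : ℝ := r * r' * Real.sin θ / ell r r' θ

/-- second-derivative-in-angle function at angles with `sin θ = 0` -/
noncomputable def DD (r r' θ : ℝ) : ℝ := r * r' * Real.cos θ / ell r r' θ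

lemma arg_pos {r r' : ℝ} (hr : 0 < r) (hr' : 0 < r') (h : r ≠ r') (θ : ℝ) :
    0 < r ^ 2 + r' ^ 2 - 2 * r * r' * Real.cos θ := by
  have h2 : (0:ℝ) < (r - r') ^ 2 :=
    lt_of_le_of_ne (sq_nonneg _) (Ne.symm (pow_ne_zero 2 (sub_ne_zero.mpr h)))
  nlinarith [Real.cos_le_one θ, mul_pos hr hr']

lemma ell_pos {r r' : ℝ} (hr : 0 < r) (hr' : 0 < r') (h : r ≠ r') (θ : ℝ) :
    0 < ell r r' θ := Real.sqrt_pos.mpr (arg_pos hr hr' h θ)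

lemma hasDerivAt_ell {r r' : ℝ} (hr : 0 < r) (hr' : 0 < r') (h : r ≠ r') (θ : ℝ) :
    HasDerivAt (ell r r') (Dd r r' θ) θ := by
  have hu : HasDerivAt (fun θ => r ^ 2 + r' ^ 2 - 2 * r * r' * Real.cos θ)
      (2 * r * r' * Real.sin θ) θ := by
    have := ((Real.hasDerivAt_cos θ).const_mul (2 * r * r')).const_sub (r ^ 2 + r' ^ 2)
    refine this.congr_deriv ?_
    ring
  have hs := (Real.hasDerivAt_sqrt (ne_of_gt (arg_pos hr hr' h θ))).comp θ hu
  have hel := ell_pos hr hr' h θ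
  have hne : ell r r' θ ≠ 0 := ne_of_gt hel
  refine hs.congr_deriv ?_
  unfold Dd ell at *
  field_simp

lemma hasDerivAt_Dd {r r' : ℝ} (hr : 0 < r) (hr' : 0 < r') (h : r ≠ r') {θ : ℝ}
    (hs : Real.sin θ = 0) : HasDerivAt (Dd r r') (DD r r' θ) θ := by
  have hnum : HasDerivAt (fun θ => r * r' * Real.sin θ) (r * r' * Real.cos θ) θ :=
    (Real.hasDerivAt_sin θ).const_mul (r * r')
  have hel := ell_pos hr hr' h θ
  have := hnum.div (hasDerivAt_ell hr hr' h θ) (ne_of_gt hel)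
  refine this.congr_deriv ?_
  unfold DD Dd
  rw [hs]
  field_simp
  ring

lemma Dd_eq_zero {r r' θ : ℝ} (hs : Real.sin θ = 0) : Dd r r' θ = 0 := by
  simp [Dd, hs]

lemma hasDerivAt_L3_1 {r1 r2 r3 : ℝ} (h1 : 0 < r1) (h12 : r1 < r2) (h23 : r2 < r3) (b x : ℝ) :
    HasDerivAt (fun t => L3 r1 r2 r3 t b) (-Dd r1 r2 (b - x) + Dd r3 r1 x) x := by
  have h2 : 0 < r2 := lt_trans h1 h12
  have h3 : 0 < r3 := lt_trans h2 h23
  have hA : HasDerivAt (fun t => ell r1 r2 (b - t)) (-Dd r1 r2 (b - x)) x := by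
    have := (hasDerivAt_ell h1 h2 (ne_of_lt h12) (b - x)).comp x
      ((hasDerivAt_id x).const_sub b)
    simpa only [Function.comp_def, id_eq, mul_neg_one, mul_one] using this
  have hC : HasDerivAt (fun t => ell r3 r1 (t - 0)) (Dd r3 r1 (x - 0)) x := by
    have := (hasDerivAt_ell h3 h1 (ne_of_gt (lt_trans h12 h23)) (x - 0)).comp x
      ((hasDerivAt_id x).sub_const 0)
    simpa only [Function.comp_def, id_eq, mul_neg_one, mul_one] using this
  have := (hA.add_const (ell r2 r3 (0 - b))).fun_add hC
  simpa [L3, sub_zero] using this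

lemma hasDerivAt_L3_2 {r1 r2 r3 : ℝ} (h1 : 0 < r1) (h12 : r1 < r2) (h23 : r2 < r3) (a y : ℝ) :
    HasDerivAt (fun t => L3 r1 r2 r3 a t) (Dd r1 r2 (y - a) - Dd r2 r3 (0 - y)) y := by
  have h2 : 0 < r2 := lt_trans h1 h12
  have h3 : 0 < r3 := lt_trans h2 h23
  have hA : HasDerivAt (fun t => ell r1 r2 (t - a)) (Dd r1 r2 (y - a)) y := by
    have := (hasDerivAt_ell h1 h2 (ne_of_lt h12) (y - a)).comp y
      ((hasDerivAt_id y).sub_const a)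
    simpa only [Function.comp_def, id_eq, mul_neg_one, mul_one] using this
  have hB : HasDerivAt (fun t => ell r2 r3 (0 - t)) (-Dd r2 r3 (0 - y)) y := by
    have := (hasDerivAt_ell h2 h3 (ne_of_lt h23) (0 - y)).comp y
      ((hasDerivAt_id y).const_sub 0)
    simpa only [Function.comp_def, id_eq, mul_neg_one] using this
  have := (hA.fun_add hB).add_const (ell r3 r1 (a - 0))
  exact this.congr_deriv (by ring)

lemma master {r1 r2 r3 : ℝ} (h1 : 0 < r1) (h12 : r1 < r2) (h23 : r2 < r3) (a b : ℝ) (sa : Real.sin a = 0) (sb : Real.sin b = 0)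
    (sab : Real.sin (b - a) = 0) :
    HasDerivAt (fun t => L3 r1 r2 r3 t b) 0 a ∧
    HasDerivAt (fun t => L3 r1 r2 r3 a t) 0 b ∧
    (hess3 r1 r2 r3 a b).det =
      DD r1 r2 (b - a) * DD r2 r3 (0 - b) + DD r1 r2 (b - a) * DD r3 r1 a +
        DD r2 r3 (0 - b) * DD r3 r1 a := by
  have h2 : 0 < r2 := lt_trans h1 h12
  have h3 : 0 < r3 := lt_trans h2 h23
  have h13 : r1 < r3 := lt_trans h12 h23
  have snb : Real.sin (0 - b) = 0 := by simp [sb]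
  refine ⟨?_, ?_, ?_⟩
  · have := hasDerivAt_L3_1 h1 h12 h23 b a
    rw [Dd_eq_zero sab, Dd_eq_zero sa] at this
    simpa using this
  · have := hasDerivAt_L3_2 h1 h12 h23 a b
    rw [Dd_eq_zero sab, Dd_eq_zero snb] at this
    simpa using this
  · -- compute the four Hessian entries
    have e1 : (fun x => pd1 (L3 r1 r2 r3) x b) =
        (fun x => -Dd r1 r2 (b - x) + Dd r3 r1 x) :=
      funext fun x => (hasDerivAt_L3_1 h1 h12 h23 b x).deriv
    have e2 : (fun y => pd2 (L3 r1 r2 r3) a y) =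
        (fun y => Dd r1 r2 (y - a) - Dd r2 r3 (0 - y)) :=
      funext fun y => (hasDerivAt_L3_2 h1 h12 h23 a y).deriv
    have e1' : (fun y => pd1 (L3 r1 r2 r3) a y) =
        (fun y => -Dd r1 r2 (y - a) + Dd r3 r1 a) :=
      funext fun y => (hasDerivAt_L3_1 h1 h12 h23 y a).deriv
    have e2' : (fun x => pd2 (L3 r1 r2 r3) x b) =
        (fun x => Dd r1 r2 (b - x) - Dd r2 r3 (0 - b)) :=
      funext fun x => (hasDerivAt_L3_2 h1 h12 h23 x b).deriv
    have hDab := hasDerivAt_Dd h1 h2 (ne_of_lt h12) (θ := b - a) sab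
    have hDa := hasDerivAt_Dd h3 h1 (ne_of_gt h13) (θ := a) sa
    have hDb := hasDerivAt_Dd h2 h3 (ne_of_lt h23) (θ := 0 - b) snb
    -- ∂₁∂₁
    have H11 : pd1 (pd1 (L3 r1 r2 r3)) a b = DD r1 r2 (b - a) + DD r3 r1 a := by
      have hA : HasDerivAt (fun x => -Dd r1 r2 (b - x) + Dd r3 r1 x)
          (DD r1 r2 (b - a) + DD r3 r1 a) a := by
        have hc : HasDerivAt (fun x => Dd r1 r2 (b - x)) (-DD r1 r2 (b - a)) a := by
          have := hDab.comp a ((hasDerivAt_id a).const_sub b)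
          simpa only [Function.comp_def, id_eq, mul_neg_one, mul_one] using this
        simpa using hc.fun_neg.fun_add hDa
      show deriv (fun x => pd1 (L3 r1 r2 r3) x b) a = _
      rw [e1]; exact hA.deriv
    -- ∂₂ of ∂₁
    have H12 : pd2 (pd1 (L3 r1 r2 r3)) a b = -DD r1 r2 (b - a) := by
      have hA : HasDerivAt (fun y => -Dd r1 r2 (y - a) + Dd r3 r1 a)
          (-DD r1 r2 (b - a)) b := by
        have hc : HasDerivAt (fun y => Dd r1 r2 (y - a)) (DD r1 r2 (b - a)) b := by
          have := hDab.comp b ((hasDerivAt_id b).sub_const a)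
          simpa only [Function.comp_def, id_eq, mul_neg_one, mul_one] using this
        simpa using hc.fun_neg.add_const (Dd r3 r1 a)
      show deriv (fun y => pd1 (L3 r1 r2 r3) a y) b = _
      rw [e1']; exact hA.deriv
    -- ∂₁ of ∂₂
    have H21 : pd1 (pd2 (L3 r1 r2 r3)) a b = -DD r1 r2 (b - a) := by
      have hA : HasDerivAt (fun x => Dd r1 r2 (b - x) - Dd r2 r3 (0 - b))
          (-DD r1 r2 (b - a)) a := by
        have hc : HasDerivAt (fun x => Dd r1 r2 (b - x)) (-DD r1 r2 (b - a)) a := by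
          have := hDab.comp a ((hasDerivAt_id a).const_sub b)
          simpa only [Function.comp_def, id_eq, mul_neg_one, mul_one] using this
        simpa using hc.sub_const (Dd r2 r3 (0 - b))
      show deriv (fun x => pd2 (L3 r1 r2 r3) x b) a = _
      rw [e2']; exact hA.deriv
    -- ∂₂∂₂
    have H22 : pd2 (pd2 (L3 r1 r2 r3)) a b = DD r1 r2 (b - a) + DD r2 r3 (0 - b) := by
      have hA : HasDerivAt (fun y => Dd r1 r2 (y - a) - Dd r2 r3 (0 - y))
          (DD r1 r2 (b - a) + DD r2 r3 (0 - b)) b := by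
        have hc : HasDerivAt (fun y => Dd r1 r2 (y - a)) (DD r1 r2 (b - a)) b := by
          have := hDab.comp b ((hasDerivAt_id b).sub_const a)
          simpa only [Function.comp_def, id_eq, mul_neg_one, mul_one] using this
        have hd : HasDerivAt (fun y => Dd r2 r3 (0 - y)) (-DD r2 r3 (0 - b)) b := by
          have := hDb.comp b ((hasDerivAt_id b).const_sub 0)
          simpa only [Function.comp_def, id_eq, mul_neg_one] using this
        simpa using hc.fun_sub hd
      show deriv (fun y => pd2 (L3 r1 r2 r3) a y) b = _
      rw [e2]; exact hA.deriv
    rw [hess3, Matrix.det_fin_two_of, H11, H12, H21, H22]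
    ring

lemma ell_of_cos_one {r r' : ℝ} (hr : 0 < r) (h : r < r') {θ : ℝ}
    (hc : Real.cos θ = 1) : ell r r' θ = r' - r := by
  unfold ell
  rw [hc, show r ^ 2 + r' ^ 2 - 2 * r * r' * 1 = (r' - r) ^ 2 by ring,
    Real.sqrt_sq (by linarith)]

lemma ell_of_cos_one' {r r' : ℝ} (hr' : 0 < r') (h : r' < r) {θ : ℝ}
    (hc : Real.cos θ = 1) : ell r r' θ = r - r' := by
  unfold ell
  rw [hc, show r ^ 2 + r' ^ 2 - 2 * r * r' * 1 = (r - r') ^ 2 by ring,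
    Real.sqrt_sq (by linarith)]

lemma ell_of_cos_neg_one {r r' : ℝ} (hr : 0 < r) (hr' : 0 < r') {θ : ℝ}
    (hc : Real.cos θ = -1) : ell r r' θ = r + r' := by
  unfold ell
  rw [hc, show r ^ 2 + r' ^ 2 - 2 * r * r' * (-1) = (r + r') ^ 2 by ring,
    Real.sqrt_sq (by linarith)]

lemma DD_neg {r r' : ℝ} (hr : 0 < r) (hr' : 0 < r') {θ : ℝ}
    (hc : Real.cos θ = -1) : DD r r' θ = -(r * r') / (r + r') := by
  rw [DD, hc, ell_of_cos_neg_one hr hr' hc]; ring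

lemma DD_pos {r r' : ℝ} (hr : 0 < r) (h : r < r') {θ : ℝ}
    (hc : Real.cos θ = 1) : DD r r' θ = r * r' / (r' - r) := by
  rw [DD, hc, ell_of_cos_one hr h hc]; ring

lemma DD_pos' {r r' : ℝ} (hr' : 0 < r') (h : r' < r) {θ : ℝ}
    (hc : Real.cos θ = 1) : DD r r' θ = r * r' / (r - r') := by
  rw [DD, hc, ell_of_cos_one' hr' h hc]; ring

/-- Proposition 2, part 2: for `0 < r1 < r2 < r3` each of the three parades
`(α₁, α₂) ∈ {(π, 0), (0, π), (π, π)}` (with `α₃ = 0`) is a critical point of the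
perimeter at which the Hessian has strictly negative determinant, hence a nondegenerate
saddle of Morse index 1. -/
theorem stmt_7 (r1 r2 r3 : ℝ) (h1 : 0 < r1) (h12 : r1 < r2) (h23 : r2 < r3) :
    ∀ q ∈ ({(π, 0), (0, π), (π, π)} : Set (ℝ × ℝ)),
      HasDerivAt (fun t => L3 r1 r2 r3 t q.2) 0 q.1 ∧
      HasDerivAt (fun t => L3 r1 r2 r3 q.1 t) 0 q.2 ∧
      (hess3 r1 r2 r3 q.1 q.2).det < 0 := by
  have h2 : 0 < r2 := lt_trans h1 h12
  have h3 : 0 < r3 := lt_trans h2 h23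
  have h13 : r1 < r3 := lt_trans h12 h23
  intro q hq
  simp only [Set.mem_insert_iff, Set.mem_singleton_iff] at hq
  rcases hq with rfl | rfl | rfl
  · -- (π, 0)
    obtain ⟨c1, c2, c3⟩ := master h1 h12 h23 π 0 (by simp) (by simp) (by simp)
    refine ⟨c1, c2, ?_⟩
    rw [c3,
      DD_neg h1 h2 (by rw [zero_sub, Real.cos_neg, Real.cos_pi]),
      DD_pos h2 h23 (by norm_num),
      DD_neg h3 h1 Real.cos_pi]
    have d1 : (0:ℝ) < r1 + r2 := by linarith
    have d2 : (0:ℝ) < r3 - r2 := by linarith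
    have d3 : (0:ℝ) < r3 + r1 := by linarith
    have e : -(r1 * r2) / (r1 + r2) * (r2 * r3 / (r3 - r2)) +
        -(r1 * r2) / (r1 + r2) * (-(r3 * r1) / (r3 + r1)) +
        r2 * r3 / (r3 - r2) * (-(r3 * r1) / (r3 + r1)) =
        -(2 * r1 * r2 ^ 2 * r3 * (r1 + r3)) / ((r1 + r2) * (r3 - r2) * (r3 + r1)) := by
      field_simp
      ring
    rw [e]
    refine div_neg_of_neg_of_pos ?_ (mul_pos (mul_pos d1 d2) d3)
    nlinarith [mul_pos (mul_pos (mul_pos (mul_pos h1 h2) h2) h3) (show (0:ℝ) < r1 + r3 by linarith)]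
  · -- (0, π)
    obtain ⟨c1, c2, c3⟩ := master h1 h12 h23 0 π (by simp) (by simp) (by simp)
    refine ⟨c1, c2, ?_⟩
    rw [c3,
      DD_neg h1 h2 (by rw [sub_zero, Real.cos_pi]),
      DD_neg h2 h3 (by rw [zero_sub, Real.cos_neg, Real.cos_pi]),
      DD_pos' h1 h13 Real.cos_zero]
    have d1 : (0:ℝ) < r1 + r2 := by linarith
    have d2 : (0:ℝ) < r2 + r3 := by linarith
    have d3 : (0:ℝ) < r3 - r1 := by linarith
    have e : -(r1 * r2) / (r1 + r2) * (-(r2 * r3) / (r2 + r3)) +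
        -(r1 * r2) / (r1 + r2) * (r3 * r1 / (r3 - r1)) +
        -(r2 * r3) / (r2 + r3) * (r3 * r1 / (r3 - r1)) =
        -(2 * r1 ^ 2 * r2 * r3 * (r2 + r3)) / ((r1 + r2) * (r2 + r3) * (r3 - r1)) := by
      field_simp
      ring
    rw [e]
    refine div_neg_of_neg_of_pos ?_ (mul_pos (mul_pos d1 d2) d3)
    nlinarith [mul_pos (mul_pos (mul_pos (mul_pos h1 h1) h2) h3) (show (0:ℝ) < r2 + r3 by linarith)]
  · -- (π, π)
    obtain ⟨c1, c2, c3⟩ := master h1 h12 h23 π π (by simp) (by simp) (by simp)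
    refine ⟨c1, c2, ?_⟩
    rw [c3,
      DD_pos h1 h12 (by rw [sub_self, Real.cos_zero]),
      DD_neg h2 h3 (by rw [zero_sub, Real.cos_neg, Real.cos_pi]),
      DD_neg h3 h1 Real.cos_pi]
    have d1 : (0:ℝ) < r2 - r1 := by linarith
    have d2 : (0:ℝ) < r2 + r3 := by linarith
    have d3 : (0:ℝ) < r3 + r1 := by linarith
    have e : r1 * r2 / (r2 - r1) * (-(r2 * r3) / (r2 + r3)) +
        r1 * r2 / (r2 - r1) * (-(r3 * r1) / (r3 + r1)) +
        -(r2 * r3) / (r2 + r3) * (-(r3 * r1) / (r3 + r1)) =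
        -(2 * r1 ^ 2 * r2 * r3 * (r2 + r3)) / ((r2 - r1) * (r2 + r3) * (r3 + r1)) := by
      field_simp
      ring
    rw [e]
    refine div_neg_of_neg_of_pos ?_ (mul_pos (mul_pos d1 d2) d3)
    nlinarith [mul_pos (mul_pos (mul_pos (mul_pos h1 h1) h2) h3) (show (0:ℝ) < r2 + r3 by linarith)]
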